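/- Let α > 0, let y : ℝ → ℝ, let t₀ ≠ 0, and set x₀ = √α/t₀, Y = y(x₀). Suppose y has derivative (−x₀³/2 + αx₀/2)·Y³ − (−3x₀²/2 + α/2 + 1)·Y² + (−3x₀/2)·Y + 1/2 at x₀ — that is, y solves the first-kind AIL representative with k₃ = −1/2, k₂ = 0, k₁ = α/2, k₀ = 0. Define u(t) = 1/t − √α·y(√α/t)/t². Then u has derivative α(1 − t₀²)·u(t₀)³/(2t₀) + (α − 1)·u(t₀)² − α·u(t₀)/(2t₀) at t₀. Hence the parameterized Class C equation y' = α(1 − x²)y³/(2x) + (α − 1)y² − αy/(2x) is a member of the AIL class. -/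

import Mathlib

/-- The parameterized Class C equation `y' = α(1 − x²)y³/(2x) + (α − 1)y² − αy/(2x)`
is a member of the AIL class: it is obtained from the first-kind AIL representative
with `k₃ = −1/2, k₂ = 0, k₁ = α/2, k₀ = 0` by the change of variables
`{x = √α/t, y = t(1 − tu)/√α}`, i.e. `u = 1/t − √α·y(√α/t)/t²`. -/
theorem classC_member_of_AIL
    (α : ℝ) (hα : 0 < α) (y : ℝ → ℝ) (t₀ : ℝ) (ht₀ : t₀ ≠ 0)
    (x₀ Y : ℝ) (hx₀ : x₀ = Real.sqrt α / t₀) (hY : Y = y x₀)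
    (hy : HasDerivAt y
      ((-x₀ ^ 3 / 2 + α * x₀ / 2) * Y ^ 3 - (-3 * x₀ ^ 2 / 2 + α / 2 + 1) * Y ^ 2 +
        (-3 * x₀ / 2) * Y + 1 / 2) x₀)
    (u : ℝ → ℝ)
    (hu : u = fun t => 1 / t - Real.sqrt α * y (Real.sqrt α / t) / t ^ 2) :
    HasDerivAt u
      (α * (1 - t₀ ^ 2) * (u t₀) ^ 3 / (2 * t₀) + (α - 1) * (u t₀) ^ 2 -
        α * (u t₀) / (2 * t₀)) t₀ := by
  have hs2' : Real.sqrt α ^ 2 = α := Real.sq_sqrt hα.le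
  obtain ⟨s, hsd⟩ : ∃ s, Real.sqrt α = s := ⟨_, rfl⟩
  rw [hsd] at hx₀ hu hs2'
  have hs0 : s ≠ 0 := by
    intro h; rw [h] at hs2'; simp at hs2'; exact absurd hs2'.symm (ne_of_gt hα)
  subst hx₀
  have ht2 : (t₀ : ℝ) ^ 2 ≠ 0 := pow_ne_zero 2 ht₀
  have hinner : HasDerivAt (fun t : ℝ => s / t) (s * (-(t₀ ^ 2)⁻¹)) t₀ := by
    simpa [div_eq_mul_inv] using (hasDerivAt_inv ht₀).const_mul s
  have hyx : y (s / t₀) = Y := hY.symm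
  have hcomp : HasDerivAt (fun t : ℝ => y (s / t))
      (((-(s / t₀) ^ 3 / 2 + α * (s / t₀) / 2) * Y ^ 3 -
        (-3 * (s / t₀) ^ 2 / 2 + α / 2 + 1) * Y ^ 2 +
        (-3 * (s / t₀) / 2) * Y + 1 / 2) * (s * (-(t₀ ^ 2)⁻¹))) t₀ := by
    exact hy.comp t₀ hinner
  have hnum := hcomp.const_mul s
  have hden : HasDerivAt (fun t : ℝ => t ^ 2) (2 * t₀) t₀ := by
    simpa using hasDerivAt_pow 2 t₀
  have hfrac := hnum.div hden ht2
  have hone : HasDerivAt (fun t : ℝ => 1 / t) (-(t₀ ^ 2)⁻¹) t₀ := by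
    simpa [one_div] using hasDerivAt_inv ht₀
  have h := hone.sub hfrac
  have hu0 : u t₀ = 1 / t₀ - s * Y / t₀ ^ 2 := by rw [hu]; simp [hyx]
  rw [hu0, hu]
  refine h.congr_deriv ?_
  rw [hyx, ← hs2']
  field_simp
  ring
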